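/- Let m, n ≥ 2 and let G be the 'dumbbell' graph consisting of two disjoint complete graphs of sizes m and n together with exactly one additional edge xy joining a vertex x of the m-clique to a vertex y of the n-clique. Then for every α ∈ [0,1], κ^α(xy) = 2(1−α)(1/m + 1/n − 1). In particular, κ^α(xy) < 0 whenever m, n ≥ 3 and α < 1. -/

import Mathlib

open Finset

/-- A probability measure on the vertex set. -/
def IsProbMeasure {V : Type*} [Fintype V] (μ : V → ℝ) : Prop :=
  (∀ z, 0 ≤ μ z) ∧ ∑ z, μ z = 1

/-- A transference plan between two probability measures. -/
def IsTransferencePlan {V : Type*} [Fintype V] (μ ν : V → ℝ) (π : V → V → ℝ) : Prop :=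
  (∀ i j, 0 ≤ π i j) ∧ (∀ i, ∑ j, π i j = μ i) ∧ (∀ j, ∑ i, π i j = ν j)

/-- The 1-Wasserstein distance between two measures on a graph:
the infimum of the transport cost over all transference plans. -/
noncomputable def Wass {V : Type*} [Fintype V] (G : SimpleGraph V) (μ ν : V → ℝ) : ℝ :=
  sInf {c : ℝ | ∃ π : V → V → ℝ, IsTransferencePlan μ ν π ∧
    c = ∑ i : V, ∑ j : V, π i j * (G.dist i j : ℝ)}

open scoped Classical in
/-- The α-lazy random walk measure at a vertex `x`:
mass α at `x`, mass (1-α)/dₓ at each neighbour of `x`. -/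
noncomputable def lazyWalk {V : Type*} [Fintype V] (G : SimpleGraph V) (α : ℝ) (x : V) :
    V → ℝ :=
  fun z =>
    if z = x then α
    else if G.Adj x z then (1 - α) / ((G.neighborSet x).ncard : ℝ) else 0

/-- The α-Ollivier-Ricci curvature of the edge `xy`: κ = 1 − W(mₓ, m_y). -/
noncomputable def kappa {V : Type*} [Fintype V] (G : SimpleGraph V) (α : ℝ) (x y : V) : ℝ :=
  1 - Wass G (lazyWalk G α x) (lazyWalk G α y)

/-- The 'dumbbell' graph: two disjoint complete graphs on `Fin m` (the `Sum.inl` copy) and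
`Fin n` (the `Sum.inr` copy), joined by the single additional edge between vertex `0` of
the `m`-clique and vertex `0` of the `n`-clique. -/
def dumbbell (m n : ℕ) : SimpleGraph (Fin m ⊕ Fin n) :=
  SimpleGraph.fromRel (fun u v =>
    match u, v with
    | Sum.inl _, Sum.inl _ => True
    | Sum.inr _, Sum.inr _ => True
    | Sum.inl i, Sum.inr j => (i : ℕ) = 0 ∧ (j : ℕ) = 0
    | Sum.inr _, Sum.inl _ => False)

/-- For the dumbbell graph with clique sizes `m, n ≥ 2`, the unique
intercommunity edge `xy` satisfies `κ^α(xy) = 2(1−α)(1/m + 1/n − 1)` for every `α ∈ [0,1]`;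
in particular `κ^α(xy) < 0` whenever `m, n ≥ 3` and `α < 1`. -/
-- Lipschitz along walks
lemma lip_walk {V : Type*} {G : SimpleGraph V} {f : V → ℝ}
    (hf : ∀ u v, G.Adj u v → f u - f v ≤ 1) :
    ∀ {u v : V} (p : G.Walk u v), f u - f v ≤ p.length := by
  intro u v p
  induction p with
  | nil => simp
  | cons h p ih =>
    have := hf _ _ h
    simp only [SimpleGraph.Walk.length_cons]
    push_cast
    linarith

lemma lip_dist {V : Type*} {G : SimpleGraph V} {f : V → ℝ}
    (hf : ∀ u v, G.Adj u v → f u - f v ≤ 1) {u v : V} (hr : G.Reachable u v) :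
    f u - f v ≤ (G.dist u v : ℝ) := by
  obtain ⟨p, hp⟩ := hr.exists_walk_length_eq_dist
  simpa [hp] using lip_walk hf p

lemma dual_bound {V : Type*} [Fintype V] (G : SimpleGraph V) (μ ν : V → ℝ) (π : V → V → ℝ)
    (f : V → ℝ) (hπ : IsTransferencePlan μ ν π)
    (hf : ∀ i j, f i - f j ≤ (G.dist i j : ℝ)) :
    (∑ i, μ i * f i) - (∑ j, ν j * f j) ≤ ∑ i : V, ∑ j : V, π i j * (G.dist i j : ℝ) := by
  obtain ⟨hpos, hrow, hcol⟩ := hπ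
  have key : (∑ i, μ i * f i) - (∑ j, ν j * f j)
      = ∑ i : V, ∑ j : V, π i j * (f i - f j) := by
    have h1 : ∑ i, μ i * f i = ∑ i : V, ∑ j : V, π i j * f i := by
      refine Finset.sum_congr rfl fun i _ => ?_
      rw [← Finset.sum_mul, hrow i]
    have h2 : ∑ j, ν j * f j = ∑ j : V, ∑ i : V, π i j * f j := by
      refine Finset.sum_congr rfl fun j _ => ?_
      rw [← Finset.sum_mul, hcol j]
    rw [h1, h2, Finset.sum_comm (f := fun j i => π i j * f j)]
    rw [← Finset.sum_sub_distrib]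
    refine Finset.sum_congr rfl fun i _ => ?_
    rw [← Finset.sum_sub_distrib]
    refine Finset.sum_congr rfl fun j _ => ?_
    ring
  rw [key]
  refine Finset.sum_le_sum fun i _ => Finset.sum_le_sum fun j _ => ?_
  exact mul_le_mul_of_nonneg_left (hf i j) (hpos i j)

lemma Wass_eq_of {V : Type*} [Fintype V] (G : SimpleGraph V) (μ ν : V → ℝ)
    (π : V → V → ℝ) (f : V → ℝ) (T : ℝ)
    (hπ : IsTransferencePlan μ ν π)
    (hf : ∀ i j, f i - f j ≤ (G.dist i j : ℝ))
    (hT : (∑ i, μ i * f i) - (∑ j, ν j * f j) = T)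
    (hcost : ∑ i : V, ∑ j : V, π i j * (G.dist i j : ℝ) ≤ T) :
    Wass G μ ν = T := by
  have hlb : ∀ c ∈ {c : ℝ | ∃ π : V → V → ℝ, IsTransferencePlan μ ν π ∧
      c = ∑ i : V, ∑ j : V, π i j * (G.dist i j : ℝ)}, T ≤ c := by
    rintro c ⟨σ, hσ, rfl⟩
    rw [← hT]
    exact dual_bound G μ ν σ f hσ hf
  have hmem : (∑ i : V, ∑ j : V, π i j * (G.dist i j : ℝ)) ∈ {c : ℝ | ∃ π : V → V → ℝ, IsTransferencePlan μ ν π ∧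
      c = ∑ i : V, ∑ j : V, π i j * (G.dist i j : ℝ)} := ⟨π, hπ, rfl⟩
  unfold Wass
  refine le_antisymm (le_trans (csInf_le ⟨T, hlb⟩ hmem) hcost) (le_csInf ⟨_, hmem⟩ hlb)

variable {m n : ℕ}

lemma db_adj_ll (i i' : Fin m) : (dumbbell m n).Adj (Sum.inl i) (Sum.inl i') ↔ i ≠ i' := by
  simp [dumbbell, SimpleGraph.fromRel_adj]

lemma db_adj_rr (j j' : Fin n) : (dumbbell m n).Adj (Sum.inr j) (Sum.inr j') ↔ j ≠ j' := by
  simp [dumbbell, SimpleGraph.fromRel_adj]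

lemma db_adj_lr (i : Fin m) (j : Fin n) :
    (dumbbell m n).Adj (Sum.inl i) (Sum.inr j) ↔ (i : ℕ) = 0 ∧ (j : ℕ) = 0 := by
  simp [dumbbell, SimpleGraph.fromRel_adj]

lemma db_adj_rl (j : Fin n) (i : Fin m) :
    (dumbbell m n).Adj (Sum.inr j) (Sum.inl i) ↔ (i : ℕ) = 0 ∧ (j : ℕ) = 0 := by
  simp [dumbbell, SimpleGraph.fromRel_adj, and_comm]


lemma fin_val0 {k : ℕ} [NeZero k] (i : Fin k) : (i : ℕ) = 0 ↔ i = 0 := by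
  rw [Fin.ext_iff, Fin.val_zero]

lemma db_deg_x [NeZero m] [NeZero n] :
    ((dumbbell m n).neighborSet (Sum.inl (0 : Fin m))).ncard = m := by
  classical
  have hset : (dumbbell m n).neighborSet (Sum.inl (0 : Fin m)) =
      ↑((((Finset.univ : Finset (Fin m)).image Sum.inl).erase
          (Sum.inl 0 : Fin m ⊕ Fin n)) ∪ {(Sum.inr (0 : Fin n) : Fin m ⊕ Fin n)}) := by
    ext v
    cases v with
    | inl i =>
      simp only [SimpleGraph.mem_neighborSet, db_adj_ll, Finset.coe_union,
        Finset.coe_erase, Finset.coe_singleton, Set.mem_union, Set.mem_diff,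
        Finset.mem_coe, Finset.mem_image, Finset.mem_univ, true_and,
        Set.mem_singleton_iff]
      constructor
      · intro h; left; exact ⟨⟨i, rfl⟩, by simpa [eq_comm] using h⟩
      · rintro (⟨-, h⟩ | h)
        · intro he; exact h (by rw [he])
        · exact absurd h (by simp)
    | inr j =>
      simp only [SimpleGraph.mem_neighborSet, db_adj_lr, Finset.coe_union,
        Finset.coe_erase, Finset.coe_singleton, Set.mem_union, Set.mem_diff,
        Finset.mem_coe, Finset.mem_image, Finset.mem_univ, true_and,
        Set.mem_singleton_iff, Fin.val_zero, true_and]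
      constructor
      · intro h; right; exact congrArg Sum.inr ((fin_val0 j).mp h)
      · rintro (⟨⟨i', hi'⟩, -⟩ | h)
        · exact absurd hi' (by simp)
        · obtain rfl : j = 0 := by simpa using h
          simp
  rw [hset, Set.ncard_coe_finset]
  rw [Finset.card_union_of_disjoint (by simp)]
  rw [Finset.card_erase_of_mem (by simp)]
  rw [Finset.card_image_of_injective _ Sum.inl_injective]
  simp only [Finset.card_univ, Fintype.card_fin, Finset.card_singleton]
  have : 0 < m := Nat.pos_of_ne_zero (NeZero.ne m)
  omega

lemma db_deg_y [NeZero m] [NeZero n] :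
    ((dumbbell m n).neighborSet (Sum.inr (0 : Fin n))).ncard = n := by
  classical
  have hset : (dumbbell m n).neighborSet (Sum.inr (0 : Fin n)) =
      ↑((((Finset.univ : Finset (Fin n)).image Sum.inr).erase
          (Sum.inr 0 : Fin m ⊕ Fin n)) ∪ {(Sum.inl (0 : Fin m) : Fin m ⊕ Fin n)}) := by
    ext v
    cases v with
    | inr j =>
      simp only [SimpleGraph.mem_neighborSet, db_adj_rr, Finset.coe_union,
        Finset.coe_erase, Finset.coe_singleton, Set.mem_union, Set.mem_diff,
        Finset.mem_coe, Finset.mem_image, Finset.mem_univ, true_and,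
        Set.mem_singleton_iff]
      constructor
      · intro h; left; exact ⟨⟨j, rfl⟩, by simpa [eq_comm] using h⟩
      · rintro (⟨-, h⟩ | h)
        · intro he; exact h (by rw [he])
        · exact absurd h (by simp)
    | inl i =>
      simp only [SimpleGraph.mem_neighborSet, db_adj_rl, Finset.coe_union,
        Finset.coe_erase, Finset.coe_singleton, Set.mem_union, Set.mem_diff,
        Finset.mem_coe, Finset.mem_image, Finset.mem_univ, true_and,
        Set.mem_singleton_iff, Fin.val_zero, and_true]
      constructor
      · intro h; right; exact congrArg Sum.inl ((fin_val0 i).mp h)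
      · rintro (⟨⟨i', hi'⟩, -⟩ | h)
        · exact absurd hi' (by simp)
        · obtain rfl : i = 0 := by simpa using h
          simp
  rw [hset, Set.ncard_coe_finset]
  rw [Finset.card_union_of_disjoint (by simp)]
  rw [Finset.card_erase_of_mem (by simp)]
  rw [Finset.card_image_of_injective _ Sum.inr_injective]
  simp only [Finset.card_univ, Fintype.card_fin, Finset.card_singleton]
  have : 0 < n := Nat.pos_of_ne_zero (NeZero.ne n)
  omega

lemma db_adj_xy [NeZero m] [NeZero n] :
    (dumbbell m n).Adj (Sum.inl (0 : Fin m)) (Sum.inr (0 : Fin n)) := by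
  rw [db_adj_lr]; simp [Fin.val_zero]

lemma db_reach_x [NeZero m] [NeZero n] (v : Fin m ⊕ Fin n) :
    (dumbbell m n).Reachable v (Sum.inl (0 : Fin m)) := by
  cases v with
  | inl i =>
    by_cases h : i = 0
    · subst h; rfl
    · exact ((db_adj_ll i 0).mpr h).reachable
  | inr j =>
    by_cases h : j = 0
    · subst h; exact ((db_adj_xy (m := m) (n := n)).symm).reachable
    · exact (((db_adj_rr j 0).mpr h).reachable).trans
        ((db_adj_xy (m := m) (n := n)).symm).reachable

lemma db_preconnected [NeZero m] [NeZero n] : (dumbbell m n).Preconnected :=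
  fun u v => (db_reach_x u).trans (db_reach_x v).symm

lemma db_dist_ll [NeZero m] [NeZero n] (i i' : Fin m) :
    (dumbbell m n).dist (Sum.inl i) (Sum.inl i') ≤ if i = i' then 0 else 1 := by
  by_cases h : i = i'
  · simp [h, SimpleGraph.dist_self]
  · simp only [h, if_false]
    exact le_of_eq (SimpleGraph.dist_eq_one_iff_adj.mpr ((db_adj_ll i i').mpr h))

lemma db_dist_rr [NeZero m] [NeZero n] (j j' : Fin n) :
    (dumbbell m n).dist (Sum.inr j) (Sum.inr j') ≤ if j = j' then 0 else 1 := by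
  by_cases h : j = j'
  · simp [h, SimpleGraph.dist_self]
  · simp only [h, if_false]
    exact le_of_eq (SimpleGraph.dist_eq_one_iff_adj.mpr ((db_adj_rr j j').mpr h))

lemma db_dist_lr [NeZero m] [NeZero n] (i : Fin m) (j : Fin n) :
    (dumbbell m n).dist (Sum.inl i) (Sum.inr j) ≤
      1 + (if i = 0 then 0 else 1) + (if j = 0 then 0 else 1) := by
  have axy := db_adj_xy (m := m) (n := n)
  by_cases hi : i = 0 <;> by_cases hj : j = 0
  · subst hi; subst hj
    simpa using SimpleGraph.dist_le (SimpleGraph.Walk.cons axy SimpleGraph.Walk.nil)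
  · subst hi
    simpa [hj] using SimpleGraph.dist_le (SimpleGraph.Walk.cons axy
      (SimpleGraph.Walk.cons ((db_adj_rr (0 : Fin n) j).mpr (Ne.symm hj)) SimpleGraph.Walk.nil))
  · subst hj
    simpa [hi] using SimpleGraph.dist_le (SimpleGraph.Walk.cons ((db_adj_ll i 0).mpr hi)
      (SimpleGraph.Walk.cons axy SimpleGraph.Walk.nil))
  · simpa [hi, hj] using SimpleGraph.dist_le (SimpleGraph.Walk.cons ((db_adj_ll i 0).mpr hi)
      (SimpleGraph.Walk.cons axy
        (SimpleGraph.Walk.cons ((db_adj_rr (0 : Fin n) j).mpr (Ne.symm hj))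
          SimpleGraph.Walk.nil)))

lemma db_dist_rl [NeZero m] [NeZero n] (j : Fin n) (i : Fin m) :
    (dumbbell m n).dist (Sum.inr j) (Sum.inl i) ≤
      1 + (if i = 0 then 0 else 1) + (if j = 0 then 0 else 1) := by
  rw [SimpleGraph.dist_comm]
  exact db_dist_lr i j

noncomputable def mxF (m n : ℕ) (α : ℝ) : Fin m ⊕ Fin n → ℝ
  | Sum.inl i => if (i : ℕ) = 0 then α else (1 - α) / m
  | Sum.inr j => if (j : ℕ) = 0 then (1 - α) / m else 0

noncomputable def myF (m n : ℕ) (α : ℝ) : Fin m ⊕ Fin n → ℝ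
  | Sum.inl i => if (i : ℕ) = 0 then (1 - α) / n else 0
  | Sum.inr j => if (j : ℕ) = 0 then α else (1 - α) / n

noncomputable def fF (m n : ℕ) : Fin m ⊕ Fin n → ℝ
  | Sum.inl i => if (i : ℕ) = 0 then 2 else 3
  | Sum.inr j => if (j : ℕ) = 0 then 1 else 0

noncomputable def cstF (m n : ℕ) : Fin m ⊕ Fin n → Fin m ⊕ Fin n → ℝ
  | Sum.inl i, Sum.inl i' => if i = i' then 0 else 1
  | Sum.inl i, Sum.inr j => 1 + (if (i : ℕ) = 0 then 0 else 1) + (if (j : ℕ) = 0 then 0 else 1)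
  | Sum.inr j, Sum.inl i => 1 + (if (i : ℕ) = 0 then 0 else 1) + (if (j : ℕ) = 0 then 0 else 1)
  | Sum.inr j, Sum.inr j' => if j = j' then 0 else 1

noncomputable def indF (m n : ℕ) : Fin m ⊕ Fin n → Fin m ⊕ Fin n → ℝ
  | Sum.inl i, Sum.inl i' => if (i : ℕ) = 1 ∧ (i' : ℕ) = 0 then 1 else 0
  | Sum.inl i, Sum.inr j => if (i : ℕ) = 1 ∧ (j : ℕ) = 1 then -1 else 0
  | Sum.inr j, Sum.inl i => if (j : ℕ) = 0 ∧ (i : ℕ) = 0 then -1 else 0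
  | Sum.inr j, Sum.inr j' => if (j : ℕ) = 0 ∧ (j' : ℕ) = 1 then 1 else 0

noncomputable def piF (m n : ℕ) (α : ℝ) : Fin m ⊕ Fin n → Fin m ⊕ Fin n → ℝ :=
  fun u v => mxF m n α u * myF m n α v + (1 - α) / m * ((1 - α) / n) * indF m n u v

@[simp] lemma mxF_inl (m n : ℕ) (α : ℝ) (i : Fin m) :
    mxF m n α (Sum.inl i) = if (i : ℕ) = 0 then α else (1 - α) / m := rfl
@[simp] lemma mxF_inr (m n : ℕ) (α : ℝ) (j : Fin n) :
    mxF m n α (Sum.inr j) = if (j : ℕ) = 0 then (1 - α) / m else 0 := rfl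
@[simp] lemma myF_inl (m n : ℕ) (α : ℝ) (i : Fin m) :
    myF m n α (Sum.inl i) = if (i : ℕ) = 0 then (1 - α) / n else 0 := rfl
@[simp] lemma myF_inr (m n : ℕ) (α : ℝ) (j : Fin n) :
    myF m n α (Sum.inr j) = if (j : ℕ) = 0 then α else (1 - α) / n := rfl
@[simp] lemma fF_inl (m n : ℕ) (i : Fin m) :
    fF m n (Sum.inl i) = if (i : ℕ) = 0 then 2 else 3 := rfl
@[simp] lemma fF_inr (m n : ℕ) (j : Fin n) :
    fF m n (Sum.inr j) = if (j : ℕ) = 0 then 1 else 0 := rfl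

lemma sum_val_pt {k : ℕ} (c : ℕ) (hc : c < k) (g : Fin k → ℝ) :
    ∑ i : Fin k, (if (i : ℕ) = c then g i else 0) = g ⟨c, hc⟩ := by
  rw [Finset.sum_eq_single (⟨c, hc⟩ : Fin k)]
  · simp
  · intro b _ hb
    exact if_neg fun h => hb (Fin.ext h)
  · simp

lemma sum_if_val0 {k : ℕ} (hk : 0 < k) (A C : ℝ) :
    ∑ i : Fin k, (if (i : ℕ) = 0 then A else C) = k * C + (A - C) := by
  have h : ∀ i : Fin k, (if (i : ℕ) = 0 then A else C)
      = C + (if (i : ℕ) = 0 then (fun _ : Fin k => A - C) i else 0) := by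
    intro i; split_ifs <;> ring
  rw [Finset.sum_congr rfl fun i _ => h i, Finset.sum_add_distrib, Finset.sum_const,
    sum_val_pt 0 hk]
  simp [mul_comm]

lemma sum_if_val2 {k : ℕ} (c : ℕ) (hc0 : c ≠ 0) (hck : c < k) (hk : 0 < k) (A B C : ℝ) :
    ∑ i : Fin k, (if (i : ℕ) = 0 then A else if (i : ℕ) = c then B else C)
      = k * C + (A - C) + (B - C) := by
  have h : ∀ i : Fin k, (if (i : ℕ) = 0 then A else if (i : ℕ) = c then B else C)
      = C + (if (i : ℕ) = 0 then (fun _ : Fin k => A - C) i else 0)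
          + (if (i : ℕ) = c then (fun _ : Fin k => B - C) i else 0) := by
    intro i
    by_cases h0 : (i : ℕ) = 0
    · rw [if_pos h0, if_pos h0, if_neg (by omega)]; ring
    · rw [if_neg h0, if_neg h0]
      by_cases hc : (i : ℕ) = c
      · rw [if_pos hc, if_pos hc]; ring
      · rw [if_neg hc, if_neg hc]; ring
  rw [Finset.sum_congr rfl fun i _ => h i, Finset.sum_add_distrib, Finset.sum_add_distrib,
    Finset.sum_const, sum_val_pt 0 hk, sum_val_pt c hck]
  simp [mul_comm]

lemma mx_eval [NeZero m] [NeZero n] (α : ℝ) :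
    lazyWalk (dumbbell m n) α (Sum.inl (0 : Fin m)) = mxF m n α := by
  funext v
  rw [lazyWalk]
  cases v with
  | inl i =>
    by_cases h : (i : ℕ) = 0
    · rw [if_pos (by rw [(fin_val0 i).mp h]), mxF_inl, if_pos h]
    · rw [if_neg (fun he => h ((fin_val0 i).mpr (Sum.inl_injective he))),
        if_pos ((db_adj_ll (0 : Fin m) i).mpr (fun he => h (by simp [← he, Fin.val_zero]))),
        db_deg_x, mxF_inl, if_neg h]
  | inr j =>
    rw [if_neg (by simp)]
    by_cases h : (j : ℕ) = 0
    · rw [if_pos ((db_adj_lr 0 j).mpr ⟨Fin.val_zero m, h⟩), db_deg_x, mxF_inr, if_pos h]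
    · rw [if_neg (fun ha => h ((db_adj_lr 0 j).mp ha).2), mxF_inr, if_neg h]

lemma my_eval [NeZero m] [NeZero n] (α : ℝ) :
    lazyWalk (dumbbell m n) α (Sum.inr (0 : Fin n)) = myF m n α := by
  funext v
  rw [lazyWalk]
  cases v with
  | inr j =>
    by_cases h : (j : ℕ) = 0
    · rw [if_pos (by rw [(fin_val0 j).mp h]), myF_inr, if_pos h]
    · rw [if_neg (fun he => h ((fin_val0 j).mpr (Sum.inr_injective he))),
        if_pos ((db_adj_rr (0 : Fin n) j).mpr (fun he => h (by simp [← he, Fin.val_zero]))),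
        db_deg_y, myF_inr, if_neg h]
  | inl i =>
    rw [if_neg (by simp)]
    by_cases h : (i : ℕ) = 0
    · rw [if_pos ((db_adj_rl 0 i).mpr ⟨h, Fin.val_zero n⟩), db_deg_y, myF_inl, if_pos h]
    · rw [if_neg (fun ha => h ((db_adj_rl 0 i).mp ha).1), myF_inl, if_neg h]

lemma val_ne_zero_of_eq_one {k : ℕ} {i : Fin k} (h : (i : ℕ) = 1) : (i : ℕ) ≠ 0 := by omega

lemma hsum_mx (hm : 0 < m) (hn : 0 < n) (α : ℝ) : ∑ v, mxF m n α v = 1 := by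
  rw [Fintype.sum_sum_type]
  simp only [mxF_inl, mxF_inr]
  rw [sum_if_val0 hm, sum_if_val0 hn]
  have hm' : (m : ℝ) ≠ 0 := Nat.cast_ne_zero.mpr (by omega)
  field_simp
  ring

lemma hsum_my (hm : 0 < m) (hn : 0 < n) (α : ℝ) : ∑ v, myF m n α v = 1 := by
  rw [Fintype.sum_sum_type]
  simp only [myF_inl, myF_inr]
  rw [sum_if_val0 hm, sum_if_val0 hn]
  have hn' : (n : ℝ) ≠ 0 := Nat.cast_ne_zero.mpr (by omega)
  field_simp
  ring

lemma ind_row (hm : 2 ≤ m) (hn : 2 ≤ n) (u : Fin m ⊕ Fin n) :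
    ∑ v, indF m n u v = 0 := by
  rw [Fintype.sum_sum_type]
  cases u with
  | inl i =>
    by_cases h : (i : ℕ) = 1
    · simp only [indF, h, true_and]
      rw [sum_val_pt 0 (by omega) (fun _ => (1 : ℝ)), sum_val_pt 1 (by omega) (fun _ => (-1 : ℝ))]
      ring
    · simp only [indF, h, false_and, if_false]
      simp
  | inr j =>
    by_cases h : (j : ℕ) = 0
    · simp only [indF, h, true_and]
      rw [sum_val_pt 0 (by omega) (fun _ => (-1 : ℝ)), sum_val_pt 1 (by omega) (fun _ => (1 : ℝ))]
      ring
    · simp only [indF, h, false_and, if_false]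
      simp

lemma ind_col (hm : 2 ≤ m) (hn : 2 ≤ n) (v : Fin m ⊕ Fin n) :
    ∑ u, indF m n u v = 0 := by
  rw [Fintype.sum_sum_type]
  cases v with
  | inl i =>
    by_cases h : (i : ℕ) = 0
    · simp only [indF, h, and_true]
      rw [sum_val_pt 1 (by omega) (fun _ => (1 : ℝ)), sum_val_pt 0 (by omega) (fun _ => (-1 : ℝ))]
      ring
    · simp only [indF, h, and_false, if_false]
      simp
  | inr j =>
    by_cases h : (j : ℕ) = 1
    · simp only [indF, h, and_true]
      rw [sum_val_pt 1 (by omega) (fun _ => (-1 : ℝ)), sum_val_pt 0 (by omega) (fun _ => (1 : ℝ))]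
      ring
    · simp only [indF, h, and_false, if_false]
      simp

lemma pi_plan (hm : 2 ≤ m) (hn : 2 ≤ n) (α : ℝ) (hα0 : 0 ≤ α) (hα1 : α ≤ 1) :
    IsTransferencePlan (mxF m n α) (myF m n α) (piF m n α) := by
  have hα' : (0 : ℝ) ≤ 1 - α := by linarith
  have hc0 : (0 : ℝ) ≤ (1 - α) / m := by positivity
  have hb : (0 : ℝ) ≤ (1 - α) / n := by positivity
  refine ⟨?_, ?_, ?_⟩
  · -- nonnegativity
    intro u v
    have hmx : 0 ≤ mxF m n α u := by
      cases u with
      | inl i => rw [mxF_inl]; split_ifs <;> assumption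
      | inr j => rw [mxF_inr]; split_ifs <;> [skip; exact le_refl 0]; assumption
    have hmy : 0 ≤ myF m n α v := by
      cases v with
      | inl i => rw [myF_inl]; split_ifs <;> [skip; exact le_refl 0]; assumption
      | inr j => rw [myF_inr]; split_ifs <;> assumption
    rw [piF]
    rcases u with i | j <;> rcases v with i' | j'
    · -- ll : ind ∈ {0,1}
      have : (0:ℝ) ≤ indF m n (Sum.inl i) (Sum.inl i') := by
        rw [indF]; split_ifs <;> norm_num
      positivity
    · -- lr : ind = -1 iff i.val=1, j'.val=1
      by_cases h : (i : ℕ) = 1 ∧ (j' : ℕ) = 1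
      · rw [show indF m n (Sum.inl i) (Sum.inr j') = -1 from by rw [indF, if_pos h],
          mxF_inl, myF_inr, if_neg (val_ne_zero_of_eq_one h.1),
          if_neg (val_ne_zero_of_eq_one h.2)]
        ring_nf
        exact le_refl _
      · rw [show indF m n (Sum.inl i) (Sum.inr j') = 0 from by rw [indF, if_neg h]]
        rw [mul_zero, add_zero]
        exact mul_nonneg hmx hmy
    · -- rl : ind = -1 iff j.val=0, i'.val=0
      by_cases h : (j : ℕ) = 0 ∧ (i' : ℕ) = 0
      · rw [show indF m n (Sum.inr j) (Sum.inl i') = -1 from by rw [indF, if_pos h],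
          mxF_inr, myF_inl, if_pos h.1, if_pos h.2]
        ring_nf
        exact le_refl _
      · rw [show indF m n (Sum.inr j) (Sum.inl i') = 0 from by rw [indF, if_neg h]]
        rw [mul_zero, add_zero]
        exact mul_nonneg hmx hmy
    · have : (0:ℝ) ≤ indF m n (Sum.inr j) (Sum.inr j') := by
        rw [indF]; split_ifs <;> norm_num
      positivity
  · intro u
    simp only [piF]
    rw [Finset.sum_add_distrib, ← Finset.mul_sum, ← Finset.mul_sum,
      hsum_my (by omega) (by omega), ind_row hm hn, mul_one, mul_zero, add_zero]
  · intro v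
    simp only [piF]
    rw [Finset.sum_add_distrib, ← Finset.sum_mul, hsum_mx (by omega) (by omega)]
    have : ∑ u, (1 - α) / ↑m * ((1 - α) / ↑n) * indF m n u v
        = (1 - α) / ↑m * ((1 - α) / ↑n) * ∑ u, indF m n u v := by
      rw [Finset.mul_sum]
    rw [this, ind_col hm hn, mul_zero, add_zero, one_mul]

lemma f_adj_lip (u v : Fin m ⊕ Fin n) (h : (dumbbell m n).Adj u v) :
    fF m n u - fF m n v ≤ 1 := by
  rcases u with i | j <;> rcases v with i' | j'
  · rw [fF_inl, fF_inl]; split_ifs <;> norm_num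
  · obtain ⟨h1, h2⟩ := (db_adj_lr i j').mp h
    rw [fF_inl, fF_inr, if_pos h1, if_pos h2]; norm_num
  · obtain ⟨h1, h2⟩ := (db_adj_rl j i').mp h
    rw [fF_inr, fF_inl, if_pos h2, if_pos h1]; norm_num
  · rw [fF_inr, fF_inr]; split_ifs <;> norm_num

lemma f_dist [NeZero m] [NeZero n] (u v : Fin m ⊕ Fin n) :
    fF m n u - fF m n v ≤ ((dumbbell m n).dist u v : ℝ) :=
  lip_dist (f_adj_lip) (db_preconnected u v)

lemma dist_le_cst [NeZero m] [NeZero n] (u v : Fin m ⊕ Fin n) :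
    ((dumbbell m n).dist u v : ℝ) ≤ cstF m n u v := by
  rcases u with i | j <;> rcases v with i' | j'
  · have h := db_dist_ll (m := m) (n := n) i i'
    rw [cstF]
    by_cases he : i = i'
    · simp only [he, if_true] at h ⊢; exact_mod_cast h
    · simp only [he, if_false] at h ⊢; exact_mod_cast h
  · have h := db_dist_lr (m := m) (n := n) i j'
    rw [cstF]
    simp only [← fin_val0] at h
    by_cases hi : (i : ℕ) = 0 <;> by_cases hj : (j' : ℕ) = 0 <;>
        simp only [hi, hj, if_true, if_false] at h ⊢ <;> exact_mod_cast h
  · have h := db_dist_rl (m := m) (n := n) j i'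
    rw [cstF]
    simp only [← fin_val0] at h
    by_cases hi : (i' : ℕ) = 0 <;> by_cases hj : (j : ℕ) = 0 <;>
        simp only [hi, hj, if_true, if_false] at h ⊢ <;> exact_mod_cast h
  · have h := db_dist_rr (m := m) (n := n) j j'
    rw [cstF]
    by_cases he : j = j'
    · simp only [he, if_true] at h ⊢; exact_mod_cast h
    · simp only [he, if_false] at h ⊢; exact_mod_cast h

lemma T_val (hm : 2 ≤ m) (hn : 2 ≤ n) (α : ℝ) :
    (∑ v, mxF m n α v * fF m n v) - (∑ v, myF m n α v * fF m n v)
      = 3 - 2*α - 2*((1-α)/m) - 2*((1-α)/n) := by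
  have hm' : (m : ℝ) ≠ 0 := Nat.cast_ne_zero.mpr (by omega)
  have hn' : (n : ℝ) ≠ 0 := Nat.cast_ne_zero.mpr (by omega)
  have e1 : ∀ i : Fin m, mxF m n α (Sum.inl i) * fF m n (Sum.inl i)
      = if (i : ℕ) = 0 then 2*α else 3*((1-α)/m) := by
    intro i; rw [mxF_inl, fF_inl]; split_ifs <;> ring
  have e2 : ∀ j : Fin n, mxF m n α (Sum.inr j) * fF m n (Sum.inr j)
      = if (j : ℕ) = 0 then (1-α)/m else 0 := by
    intro j; rw [mxF_inr, fF_inr]; split_ifs <;> ring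
  have e3 : ∀ i : Fin m, myF m n α (Sum.inl i) * fF m n (Sum.inl i)
      = if (i : ℕ) = 0 then 2*((1-α)/n) else 0 := by
    intro i; rw [myF_inl, fF_inl]; split_ifs <;> ring
  have e4 : ∀ j : Fin n, myF m n α (Sum.inr j) * fF m n (Sum.inr j)
      = if (j : ℕ) = 0 then α else 0 := by
    intro j; rw [myF_inr, fF_inr]; split_ifs <;> ring
  rw [Fintype.sum_sum_type, Fintype.sum_sum_type,
    Finset.sum_congr rfl (fun i _ => e1 i), Finset.sum_congr rfl (fun j _ => e2 j),
    Finset.sum_congr rfl (fun i _ => e3 i), Finset.sum_congr rfl (fun j _ => e4 j),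
    sum_if_val0 (by omega : 0 < m), sum_if_val0 (by omega : 0 < n),
    sum_if_val0 (by omega : 0 < m), sum_if_val0 (by omega : 0 < n)]
  field_simp
  ring

lemma innerL (hm : 2 ≤ m) (hn : 2 ≤ n) (α : ℝ) (i : Fin m) :
    ∑ v, myF m n α v * cstF m n (Sum.inl i) v
      = if (i : ℕ) = 0 then α + 2*(1-α) - 2*((1-α)/n)
        else 2*α + 3*(1-α) - 2*((1-α)/n) := by
  have hn' : (n : ℝ) ≠ 0 := Nat.cast_ne_zero.mpr (by omega)
  have hnb : (n : ℝ) * ((1-α)/n) = 1 - α := by field_simp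
  rw [Fintype.sum_sum_type]
  by_cases hi : (i : ℕ) = 0
  · have b1 : ∀ i' : Fin m, myF m n α (Sum.inl i') * cstF m n (Sum.inl i) (Sum.inl i')
        = 0 := by
      intro i'
      rw [myF_inl, cstF]
      by_cases h' : (i' : ℕ) = 0
      · simp only [if_pos h', if_pos (Fin.ext (hi.trans h'.symm) : i = i')]; ring
      · simp only [if_neg h']; ring
    have b2 : ∀ j : Fin n, myF m n α (Sum.inr j) * cstF m n (Sum.inl i) (Sum.inr j)
        = if (j : ℕ) = 0 then α else 2*((1-α)/n) := by
      intro j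
      rw [myF_inr, cstF, if_pos hi]
      split_ifs with h <;> ring
    rw [Finset.sum_congr rfl (fun i' _ => b1 i'), Finset.sum_congr rfl (fun j _ => b2 j),
      Finset.sum_const_zero, sum_if_val0 (by omega : 0 < n), if_pos hi]
    linear_combination 2 * hnb
  · have b1 : ∀ i' : Fin m, myF m n α (Sum.inl i') * cstF m n (Sum.inl i) (Sum.inl i')
        = if (i' : ℕ) = 0 then (1-α)/n else 0 := by
      intro i'
      rw [myF_inl, cstF]
      by_cases h' : (i' : ℕ) = 0
      · simp only [if_pos h', if_neg (show ¬ i = i' from fun he => hi (by rw [he, h']))]; ring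
      · simp only [if_neg h']; ring
    have b2 : ∀ j : Fin n, myF m n α (Sum.inr j) * cstF m n (Sum.inl i) (Sum.inr j)
        = if (j : ℕ) = 0 then 2*α else 3*((1-α)/n) := by
      intro j
      rw [myF_inr, cstF, if_neg hi]
      split_ifs with h <;> ring
    rw [Finset.sum_congr rfl (fun i' _ => b1 i'), Finset.sum_congr rfl (fun j _ => b2 j),
      sum_if_val0 (by omega : 0 < m), sum_if_val0 (by omega : 0 < n), if_neg hi]
    linear_combination 3 * hnb

lemma innerR (hm : 2 ≤ m) (hn : 2 ≤ n) (α : ℝ) (j : Fin n) :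
    ∑ v, myF m n α v * cstF m n (Sum.inr j) v
      = if (j : ℕ) = 0 then 1 - α else 1 := by
  have hn' : (n : ℝ) ≠ 0 := Nat.cast_ne_zero.mpr (by omega)
  have hnb : (n : ℝ) * ((1-α)/n) = 1 - α := by field_simp
  rw [Fintype.sum_sum_type]
  by_cases hj : (j : ℕ) = 0
  · have b1 : ∀ i' : Fin m, myF m n α (Sum.inl i') * cstF m n (Sum.inr j) (Sum.inl i')
        = if (i' : ℕ) = 0 then (1-α)/n else 0 := by
      intro i'
      rw [myF_inl, cstF, if_pos hj]
      split_ifs with h <;> ring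
    have b2 : ∀ j' : Fin n, myF m n α (Sum.inr j') * cstF m n (Sum.inr j) (Sum.inr j')
        = if (j' : ℕ) = 0 then 0 else (1-α)/n := by
      intro j'
      rw [myF_inr, cstF]
      by_cases h' : (j' : ℕ) = 0
      · simp only [if_pos h', if_pos (Fin.ext (hj.trans h'.symm) : j = j')]; ring
      · simp only [if_neg h', if_neg (show ¬ j = j' from fun he => h' (by rw [← he, hj]))]; ring
    rw [Finset.sum_congr rfl (fun i' _ => b1 i'), Finset.sum_congr rfl (fun j' _ => b2 j'),
      sum_if_val0 (by omega : 0 < m), sum_if_val0 (by omega : 0 < n), if_pos hj]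
    linear_combination hnb
  · have b1 : ∀ i' : Fin m, myF m n α (Sum.inl i') * cstF m n (Sum.inr j) (Sum.inl i')
        = if (i' : ℕ) = 0 then 2*((1-α)/n) else 0 := by
      intro i'
      rw [myF_inl, cstF, if_neg hj]
      split_ifs with h <;> ring
    have b2 : ∀ j' : Fin n, myF m n α (Sum.inr j') * cstF m n (Sum.inr j) (Sum.inr j')
        = if (j' : ℕ) = 0 then α else if (j' : ℕ) = (j : ℕ) then 0 else (1-α)/n := by
      intro j'
      rw [myF_inr, cstF]
      by_cases h' : (j' : ℕ) = 0
      · simp only [if_pos h',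
          if_neg (show ¬ j = j' from fun he => hj (by rw [he, h']))]; ring
      · simp only [if_neg h']
        by_cases h2 : (j' : ℕ) = (j : ℕ)
        · simp only [if_pos h2, if_pos (Fin.ext h2.symm : j = j')]; ring
        · simp only [if_neg h2,
            if_neg (show ¬ j = j' from fun he => h2 (by rw [he]))]; ring
    rw [Finset.sum_congr rfl (fun i' _ => b1 i'), Finset.sum_congr rfl (fun j' _ => b2 j'),
      sum_if_val0 (by omega : 0 < m),
      sum_if_val2 (j : ℕ) hj j.isLt (by omega : 0 < n), if_neg hj]
    linear_combination hnb

lemma ind_cost (hm : 2 ≤ m) (hn : 2 ≤ n) :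
    ∑ u, ∑ v, indF m n u v * cstF m n u v = -2 := by
  rw [Fintype.sum_sum_type]
  have hL : ∀ i : Fin m, ∑ v, indF m n (Sum.inl i) v * cstF m n (Sum.inl i) v
      = if (i : ℕ) = 1 then (-2 : ℝ) else 0 := by
    intro i
    rw [Fintype.sum_sum_type]
    by_cases hi : (i : ℕ) = 1
    · have b1 : ∀ i' : Fin m, indF m n (Sum.inl i) (Sum.inl i') * cstF m n (Sum.inl i) (Sum.inl i')
          = if (i' : ℕ) = 0 then (fun i' : Fin m => if i = i' then (0:ℝ) else 1) i' else 0 := by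
        intro i'
        rw [indF, cstF]
        by_cases h' : (i' : ℕ) = 0
        · simp only [hi, h', and_self, if_true, one_mul]
        · simp only [h', and_false, if_false, zero_mul]
      have b2 : ∀ j : Fin n, indF m n (Sum.inl i) (Sum.inr j) * cstF m n (Sum.inl i) (Sum.inr j)
          = if (j : ℕ) = 1 then (fun j : Fin n =>
              -1 * (1 + (if (i : ℕ) = 0 then (0:ℝ) else 1) + (if (j : ℕ) = 0 then 0 else 1))) j
            else 0 := by
        intro j
        rw [indF, cstF]
        by_cases h' : (j : ℕ) = 1
        · simp only [hi, h', and_self, if_true]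
        · simp only [h', and_false, if_false, zero_mul]
      rw [Finset.sum_congr rfl (fun i' _ => b1 i'), Finset.sum_congr rfl (fun j _ => b2 j),
        sum_val_pt 0 (by omega : 0 < m), sum_val_pt 1 (by omega : 1 < n), if_pos hi]
      rw [if_neg (show ¬ i = ⟨0, by omega⟩ from fun he => by
        rw [he] at hi; simp at hi)]
      norm_num [hi]
    · have b1 : ∀ i' : Fin m, indF m n (Sum.inl i) (Sum.inl i') * cstF m n (Sum.inl i) (Sum.inl i')
          = 0 := by
        intro i'
        rw [indF]
        simp only [hi, false_and, if_false, zero_mul]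
      have b2 : ∀ j : Fin n, indF m n (Sum.inl i) (Sum.inr j) * cstF m n (Sum.inl i) (Sum.inr j)
          = 0 := by
        intro j
        rw [indF]
        simp only [hi, false_and, if_false, zero_mul]
      rw [Finset.sum_congr rfl (fun i' _ => b1 i'), Finset.sum_congr rfl (fun j _ => b2 j),
        if_neg hi]
      simp
  have hR : ∀ j : Fin n, ∑ v, indF m n (Sum.inr j) v * cstF m n (Sum.inr j) v = 0 := by
    intro j
    rw [Fintype.sum_sum_type]
    by_cases hj : (j : ℕ) = 0
    · have b1 : ∀ i' : Fin m, indF m n (Sum.inr j) (Sum.inl i') * cstF m n (Sum.inr j) (Sum.inl i')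
          = if (i' : ℕ) = 0 then (fun i' : Fin m =>
              -1 * (1 + (if (i' : ℕ) = 0 then (0:ℝ) else 1) + (if (j : ℕ) = 0 then 0 else 1))) i'
            else 0 := by
        intro i'
        rw [indF, cstF]
        by_cases h' : (i' : ℕ) = 0
        · simp only [hj, h', and_self, if_true]
        · simp only [h', and_false, if_false, zero_mul]
      have b2 : ∀ j' : Fin n, indF m n (Sum.inr j) (Sum.inr j') * cstF m n (Sum.inr j) (Sum.inr j')
          = if (j' : ℕ) = 1 then (fun j' : Fin n => if j = j' then (0:ℝ) else 1) j' else 0 := by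
        intro j'
        rw [indF, cstF]
        by_cases h' : (j' : ℕ) = 1
        · simp only [hj, h', and_self, if_true, one_mul]
        · simp only [h', and_false, if_false, zero_mul]
      rw [Finset.sum_congr rfl (fun i' _ => b1 i'), Finset.sum_congr rfl (fun j' _ => b2 j'),
        sum_val_pt 0 (by omega : 0 < m), sum_val_pt 1 (by omega : 1 < n)]
      rw [if_neg (show ¬ j = ⟨1, by omega⟩ from fun he => by
        rw [he] at hj; simp at hj)]
      norm_num [hj]
    · have b1 : ∀ i' : Fin m, indF m n (Sum.inr j) (Sum.inl i') * cstF m n (Sum.inr j) (Sum.inl i')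
          = 0 := by
        intro i'
        rw [indF]
        simp only [hj, false_and, if_false, zero_mul]
      have b2 : ∀ j' : Fin n, indF m n (Sum.inr j) (Sum.inr j') * cstF m n (Sum.inr j) (Sum.inr j')
          = 0 := by
        intro j'
        rw [indF]
        simp only [hj, false_and, if_false, zero_mul]
      rw [Finset.sum_congr rfl (fun i' _ => b1 i'), Finset.sum_congr rfl (fun j' _ => b2 j')]
      simp
  rw [Finset.sum_congr rfl (fun i _ => hL i), Finset.sum_congr rfl (fun j _ => hR j),
    sum_val_pt 1 (by omega : 1 < m) (fun _ => (-2 : ℝ))]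
  simp

lemma db_wass [NeZero m] [NeZero n] (hm : 2 ≤ m) (hn : 2 ≤ n)
    (α : ℝ) (hα0 : 0 ≤ α) (hα1 : α ≤ 1) :
    Wass (dumbbell m n) (mxF m n α) (myF m n α)
      = 3 - 2*α - 2*((1-α)/m) - 2*((1-α)/n) := by
  have hm' : (m : ℝ) ≠ 0 := Nat.cast_ne_zero.mpr (by omega)
  have hn' : (n : ℝ) ≠ 0 := Nat.cast_ne_zero.mpr (by omega)
  refine Wass_eq_of _ _ _ (piF m n α) (fF m n) _ (pi_plan hm hn α hα0 hα1)
    (fun u v => f_dist u v) (T_val hm hn α) ?_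
  have hpos := (pi_plan hm hn α hα0 hα1).1
  have step1 : ∑ u, ∑ v, piF m n α u v * ((dumbbell m n).dist u v : ℝ)
      ≤ ∑ u, ∑ v, piF m n α u v * cstF m n u v :=
    Finset.sum_le_sum fun u _ => Finset.sum_le_sum fun v _ =>
      mul_le_mul_of_nonneg_left (dist_le_cst u v) (hpos u v)
  refine le_trans step1 (le_of_eq ?_)
  have split : ∀ u v, piF m n α u v * cstF m n u v
      = mxF m n α u * (myF m n α v * cstF m n u v)
        + (1-α)/m * ((1-α)/n) * (indF m n u v * cstF m n u v) := by
    intro u v; rw [piF]; ring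
  have e : ∀ u, ∑ v, piF m n α u v * cstF m n u v
      = mxF m n α u * (∑ v, myF m n α v * cstF m n u v)
        + (1-α)/m * ((1-α)/n) * (∑ v, indF m n u v * cstF m n u v) := by
    intro u
    rw [Finset.sum_congr rfl (fun v _ => split u v), Finset.sum_add_distrib,
      ← Finset.mul_sum, ← Finset.mul_sum]
  rw [Finset.sum_congr rfl (fun u _ => e u), Finset.sum_add_distrib, ← Finset.mul_sum,
    ind_cost hm hn]
  have hA : ∀ i : Fin m, mxF m n α (Sum.inl i) * (∑ v, myF m n α v * cstF m n (Sum.inl i) v)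
      = if (i : ℕ) = 0 then α * (α + 2*(1-α) - 2*((1-α)/n))
        else ((1-α)/m) * (2*α + 3*(1-α) - 2*((1-α)/n)) := by
    intro i
    rw [innerL hm hn, mxF_inl]
    split_ifs <;> ring
  have hB : ∀ j : Fin n, mxF m n α (Sum.inr j) * (∑ v, myF m n α v * cstF m n (Sum.inr j) v)
      = if (j : ℕ) = 0 then ((1-α)/m) * (1-α) else 0 := by
    intro j
    rw [innerR hm hn, mxF_inr]
    split_ifs <;> ring
  rw [Fintype.sum_sum_type, Finset.sum_congr rfl (fun i _ => hA i),
    Finset.sum_congr rfl (fun j _ => hB j),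
    sum_if_val0 (by omega : 0 < m), sum_if_val0 (by omega : 0 < n)]
  field_simp
  ring

theorem curvature_dumbbell (m n : ℕ) (hm : 2 ≤ m) (hn : 2 ≤ n)
    (α : ℝ) (hα0 : 0 ≤ α) (hα1 : α ≤ 1) :
    kappa (dumbbell m n) α (Sum.inl ⟨0, by omega⟩) (Sum.inr ⟨0, by omega⟩) =
      2 * (1 - α) * (1 / (m : ℝ) + 1 / (n : ℝ) - 1) ∧
    (3 ≤ m → 3 ≤ n → α < 1 →
      kappa (dumbbell m n) α (Sum.inl ⟨0, by omega⟩) (Sum.inr ⟨0, by omega⟩) < 0) := by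
  haveI : NeZero m := ⟨by omega⟩
  haveI : NeZero n := ⟨by omega⟩
  have hm' : (m : ℝ) ≠ 0 := Nat.cast_ne_zero.mpr (by omega)
  have hn' : (n : ℝ) ≠ 0 := Nat.cast_ne_zero.mpr (by omega)
  simp only [show ∀ (h : 0 < m), (⟨0, h⟩ : Fin m) = 0 from fun h => by
      ext; simp [Fin.val_zero],
    show ∀ (h : 0 < n), (⟨0, h⟩ : Fin n) = 0 from fun h => by
      ext; simp [Fin.val_zero]]
  have hk : kappa (dumbbell m n) α (Sum.inl (0 : Fin m)) (Sum.inr (0 : Fin n)) =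
      2 * (1 - α) * (1 / (m : ℝ) + 1 / (n : ℝ) - 1) := by
    rw [kappa, mx_eval α, my_eval α, db_wass hm hn α hα0 hα1]
    field_simp
    ring
  refine ⟨hk, fun h3m h3n hα => ?_⟩
  rw [hk]
  have h1 : 1 / (m : ℝ) ≤ 1/3 :=
    one_div_le_one_div_of_le (by norm_num) (by exact_mod_cast h3m)
  have h2 : 1 / (n : ℝ) ≤ 1/3 :=
    one_div_le_one_div_of_le (by norm_num) (by exact_mod_cast h3n)
  exact mul_neg_of_pos_of_neg (by linarith) (by linarith)
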